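/- For every even n ≥ 4, the only vertex-transitive connected finite graphs G satisfying Υ_sym(sr_n, G) = (n+2) · Υ(sr_n, G) > 0 are the complete graph K_{n+2} and the graph K'_{n+2} (the complete graph K_{n+2} minus a perfect matching). -/

import Mathlib

/-- `X` meets every subgraph of `Γ` isomorphic to `K`. -/
def KCover {W V : Type} (K : SimpleGraph W) (Γ : SimpleGraph V) (X : Set V) : Prop :=
  ∀ f : K →g Γ, Function.Injective f → ∃ w : W, f w ∈ X

/-- `X` is invariant under all automorphisms of `Γ`. -/
def AutInvariant {V : Type} (Γ : SimpleGraph V) (X : Set V) : Prop :=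
  ∀ g : Γ ≃g Γ, (fun v => g v) '' X = X

/-- The vertex representativity `Υ(K, Γ)`. -/
noncomputable def upsilon {W V : Type} (K : SimpleGraph W) (Γ : SimpleGraph V) : ℕ :=
  sInf {m | ∃ X : Set V, X.Finite ∧ Nat.card X = m ∧ KCover K Γ X}

/-- The symmetric vertex representativity `Υ_sym(K, Γ)`. -/
noncomputable def upsilonSym {W V : Type} (K : SimpleGraph W) (Γ : SimpleGraph V) : ℕ :=
  sInf {m | ∃ X : Set V, X.Finite ∧ Nat.card X = m ∧ AutInvariant Γ X ∧ KCover K Γ X}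

/-- The `Aut Γ`-orbit of a vertex. -/
def autOrbit {V : Type} (Γ : SimpleGraph V) (v : V) : Set V :=
  {w | ∃ g : Γ ≃g Γ, g v = w}

/-- The "star with a tail" `sr_d`: the star `K_{1,d}` (centre `0`, leaves `1,…,d`)
with an extra vertex `d+1` joined to the leaf `d`; it has `d+2` vertices. -/
def srGraph (d : ℕ) : SimpleGraph (Fin (d + 2)) :=
  SimpleGraph.fromRel (fun x y =>
    (x.val = 0 ∧ 1 ≤ y.val ∧ y.val ≤ d) ∨ (x.val = d ∧ y.val = d + 1))

/-- `K'_m`: the complete graph on `m` vertices minus a perfect matching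
(the matching pairs `2i` with `2i+1`); for even `m` every vertex has degree `m-2`. -/
def kPrime (m : ℕ) : SimpleGraph (Fin m) :=
  SimpleGraph.fromRel (fun x y => x.val / 2 ≠ y.val / 2)

/-- `G` is vertex-transitive. -/
def VertexTransitive {V : Type} (G : SimpleGraph V) : Prop :=
  ∀ u v : V, ∃ g : G ≃g G, g u = v



open SimpleGraph Finset Function

lemma aut_finite {V : Type} [Fintype V] (G : SimpleGraph V) : Finite (G ≃g G) :=
  Finite.of_injective (fun g => g.toEquiv) (fun a b h => by cases a; cases b; simpa using h)

lemma sr_adj_center {n : ℕ} (i : Fin (n+2)) (h1 : 1 ≤ i.val) (h2 : i.val ≤ n) :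
    (srGraph n).Adj ⟨0, by omega⟩ i := by
  rw [srGraph, fromRel_adj]
  exact ⟨fun h => by have := congrArg Fin.val h; simp at this; omega,
    Or.inl (Or.inl ⟨rfl, h1, h2⟩)⟩

lemma sr_adj_tail {n : ℕ} (hn : 1 ≤ n) : (srGraph n).Adj ⟨n, by omega⟩ ⟨n+1, by omega⟩ := by
  rw [srGraph, fromRel_adj]
  exact ⟨fun h => by have := congrArg Fin.val h; simp at this,
    Or.inl (Or.inr ⟨rfl, rfl⟩)⟩

lemma srHom {n : ℕ} (hn : 4 ≤ n) {W : Type} (H : SimpleGraph W) (e : Fin (n+2) → W)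
    (hinj : Function.Injective e)
    (h1 : ∀ i : Fin (n+2), 1 ≤ i.val → i.val ≤ n → H.Adj (e ⟨0, by omega⟩) (e i))
    (h2 : H.Adj (e ⟨n, by omega⟩) (e ⟨n+1, by omega⟩)) :
    ∃ f : srGraph n →g H, Function.Injective f ∧ ∀ k, f k = e k := by
  refine ⟨⟨e, ?_⟩, hinj, fun k => rfl⟩
  intro a b hab
  rw [srGraph, fromRel_adj] at hab
  obtain ⟨hne, h | h⟩ := hab
  · rcases h with ⟨ha, hb1, hb2⟩ | ⟨ha, hb⟩
    · have : a = ⟨0, by omega⟩ := Fin.ext ha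
      rw [this]; exact h1 b hb1 hb2
    · have ha' : a = ⟨n, by omega⟩ := Fin.ext ha
      have hb' : b = ⟨n+1, by omega⟩ := Fin.ext hb
      rw [ha', hb']; exact h2
  · rcases h with ⟨hb, ha1, ha2⟩ | ⟨hb, ha⟩
    · have : b = ⟨0, by omega⟩ := Fin.ext hb
      rw [this]; exact (h1 a ha1 ha2).symm
    · have hb' : b = ⟨n, by omega⟩ := Fin.ext hb
      have ha' : a = ⟨n+1, by omega⟩ := Fin.ext ha
      rw [ha', hb']; exact h2.symm

/-- Build an injective copy of `sr_n` from a centre, leaves, and a tail. -/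
lemma mkCopy {n : ℕ} (hn : 4 ≤ n) {V : Type} [DecidableEq V] (G : SimpleGraph V)
    (u w : V) (L : Finset V) (hcard : L.card = n)
    (hadj : ∀ l ∈ L, G.Adj u l) (l0 : V) (hl0 : l0 ∈ L)
    (hlw : G.Adj l0 w) (hwu : w ≠ u) (hwL : w ∉ L) :
    ∃ f : srGraph n →g G, Function.Injective f ∧ f ⟨0, by omega⟩ = u ∧ f ⟨n+1, by omega⟩ = w ∧
      (∀ k, f k = u ∨ f k = w ∨ f k ∈ L) ∧ (∀ l ∈ L, ∃ k, f k = l) := by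
  have huL : u ∉ L := fun h => (G.loopless.irrefl u (hadj u h))
  have eL : {x // x ∈ L} ≃ Fin n := Finset.equivFinOfCardEq hcard
  set j0 : Fin n := eL ⟨l0, hl0⟩ with hj0
  have hlast : n - 1 < n := by omega
  set σ : Fin n → V := fun j => (eL.symm (Equiv.swap j0 ⟨n-1, hlast⟩ j) : V) with hσ
  have hσinj : Function.Injective σ := by
    intro a b h
    have := Subtype.coe_injective h
    exact (Equiv.swap j0 ⟨n-1, hlast⟩).injective (eL.symm.injective this)
  have hσL : ∀ j, σ j ∈ L := fun j => (eL.symm _).2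
  have hσlast : σ ⟨n-1, hlast⟩ = l0 := by
    simp only [hσ, Equiv.swap_apply_right, hj0, Equiv.symm_apply_apply]
  have hσsurj : ∀ l ∈ L, ∃ j, σ j = l := by
    intro l hl
    exact ⟨Equiv.swap j0 ⟨n-1, hlast⟩ (eL ⟨l, hl⟩), by
      simp only [hσ, Equiv.swap_apply_self, Equiv.symm_apply_apply]⟩
  set e : Fin (n+2) → V := fun k =>
    if h0 : k.val = 0 then u else if h1 : k.val = n+1 then w
    else σ ⟨k.val - 1, by omega⟩ with he
  have he0 : e ⟨0, by omega⟩ = u := by simp [he]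
  have heT : e ⟨n+1, by omega⟩ = w := by
    simp only [he]; rw [dif_neg (by omega)]; simp
  have heMid : ∀ (k : Fin (n+2)) (hk1 : 1 ≤ k.val) (hk2 : k.val ≤ n),
      e k = σ ⟨k.val - 1, by omega⟩ := by
    intro k hk1 hk2
    simp only [he]
    rw [dif_neg (by omega), dif_neg (by omega)]
  have hval : ∀ (k : Fin (n+2)), (k.val = 0 ∧ e k = u) ∨ (k.val = n+1 ∧ e k = w) ∨
      (1 ≤ k.val ∧ k.val ≤ n ∧ e k ∈ L) := by
    intro k
    by_cases h0 : k.val = 0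
    · left; exact ⟨h0, by have : k = ⟨0, by omega⟩ := Fin.ext h0; rw [this, he0]⟩
    by_cases hT : k.val = n+1
    · right; left; exact ⟨hT, by have : k = ⟨n+1, by omega⟩ := Fin.ext hT; rw [this, heT]⟩
    right; right
    have h1 : 1 ≤ k.val := by omega
    have h2 : k.val ≤ n := by omega
    exact ⟨h1, h2, by rw [heMid k h1 h2]; exact hσL _⟩
  have hinj : Function.Injective e := by
    intro a b hab
    rcases hval a with ⟨ha, hea⟩ | ⟨ha, hea⟩ | ⟨ha1, ha2, hea⟩ <;>
      rcases hval b with ⟨hb, heb⟩ | ⟨hb, heb⟩ | ⟨hb1, hb2, heb⟩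
    · exact Fin.ext (by omega)
    · exact absurd (hea ▸ heb ▸ hab).symm hwu
    · exact absurd (hea ▸ hab ▸ heb) huL
    · exact absurd (hea ▸ heb ▸ hab) hwu
    · exact Fin.ext (by omega)
    · exact absurd (hea ▸ hab ▸ heb) hwL
    · exact absurd (by rw [← heb, ← hab]; exact hea) huL
    · exact absurd (by rw [← heb, ← hab]; exact hea) hwL
    · rw [heMid a ha1 ha2, heMid b hb1 hb2] at hab
      have := hσinj hab
      have : a.val - 1 = b.val - 1 := congrArg Fin.val this
      exact Fin.ext (by omega)
  obtain ⟨f, hfinj, hfe⟩ := srHom hn G e hinj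
    (by
      intro i h1 h2
      rw [he0, heMid i h1 h2]
      exact hadj _ (hσL _))
    (by
      have heN : e ⟨n, by omega⟩ = l0 := by
        rw [heMid ⟨n, by omega⟩ (by show 1 ≤ n; omega) (by show n ≤ n; omega)]
        exact hσlast
      rw [heT, heN]
      exact hlw)
  refine ⟨f, hfinj, by rw [hfe, he0], by rw [hfe, heT], ?_, ?_⟩
  · intro k
    rw [hfe]
    rcases hval k with ⟨_, h⟩ | ⟨_, h⟩ | ⟨_, _, h⟩
    · exact Or.inl h
    · exact Or.inr (Or.inl h)
    · exact Or.inr (Or.inr h)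
  · intro l hl
    obtain ⟨j, hj⟩ := hσsurj l hl
    refine ⟨⟨j.val + 1, by omega⟩, ?_⟩
    rw [hfe, heMid _ (by show 1 ≤ j.val + 1; omega) (by show j.val + 1 ≤ n; omega)]
    show σ ⟨j.val + 1 - 1, _⟩ = l
    have : (⟨j.val + 1 - 1, by omega⟩ : Fin n) = j := Fin.ext (by show j.val + 1 - 1 = j.val; omega)
    rw [this]
    exact hj

lemma kCover_empty_iff {n : ℕ} {V : Type} (G : SimpleGraph V)
    (hno : ¬ ∃ f : srGraph n →g G, Function.Injective f) :
    upsilonSym (srGraph n) G = 0 := by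
  have : (0:ℕ) ∈ {m | ∃ X : Set V, X.Finite ∧ Nat.card X = m ∧ AutInvariant G X ∧
      KCover (srGraph n) G X} := by
    refine ⟨∅, Set.finite_empty, by simp, fun g => by simp, fun f hf => absurd ⟨f, hf⟩ hno⟩
  exact Nat.eq_zero_of_le_zero (Nat.sInf_le this)

lemma exists_copy_of_pos {n : ℕ} {V : Type} (G : SimpleGraph V)
    (h : 0 < upsilonSym (srGraph n) G) : ∃ f : srGraph n →g G, Function.Injective f := by
  by_contra hno
  rw [kCover_empty_iff G hno] at h
  exact Nat.lt_irrefl 0 h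

lemma upsilonSym_eq_card {n : ℕ} {V : Type} [Fintype V] (G : SimpleGraph V)
    (htr : VertexTransitive G)
    (f0 : srGraph n →g G) (hf0 : Function.Injective f0) :
    upsilonSym (srGraph n) G = Fintype.card V := by
  have hset : {m | ∃ X : Set V, X.Finite ∧ Nat.card X = m ∧ AutInvariant G X ∧
      KCover (srGraph n) G X} = {Fintype.card V} := by
    ext m
    simp only [Set.mem_setOf_eq, Set.mem_singleton_iff]
    constructor
    · rintro ⟨X, hfin, hcard, hinv, hcov⟩
      obtain ⟨k, hk⟩ := hcov f0 hf0
      have hXuniv : X = Set.univ := by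
        ext v
        simp only [Set.mem_univ, iff_true]
        obtain ⟨g, hg⟩ := htr (f0 k) v
        rw [← hinv g]
        exact ⟨f0 k, hk, hg⟩
      rw [hXuniv] at hcard
      rw [← hcard, Nat.card_univ, Nat.card_eq_fintype_card]
    · rintro rfl
      refine ⟨Set.univ, Set.finite_univ, by rw [Nat.card_univ, Nat.card_eq_fintype_card],
        fun g => ?_, fun f hf => ⟨⟨0, by omega⟩, trivial⟩⟩
      ext v
      simp only [Set.image_univ, Set.mem_range, Set.mem_univ, iff_true]
      exact ⟨g.symm v, by simp⟩
  rw [upsilonSym, hset, csInf_singleton]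

lemma upsilon_spec {n : ℕ} {V : Type} [Fintype V] (G : SimpleGraph V) :
    ∃ X : Set V, X.Finite ∧ Nat.card X = upsilon (srGraph n) G ∧ KCover (srGraph n) G X := by
  have hne : {m | ∃ X : Set V, X.Finite ∧ Nat.card X = m ∧ KCover (srGraph n) G X}.Nonempty :=
    ⟨Fintype.card V, Set.univ, Set.finite_univ, by rw [Nat.card_univ, Nat.card_eq_fintype_card],
      fun f hf => ⟨⟨0, by omega⟩, trivial⟩⟩
  exact Nat.sInf_mem hne

lemma upsilon_eq_one {n : ℕ} (H : SimpleGraph (Fin (n+2)))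
    (f0 : srGraph n →g H) (hf0 : Function.Injective f0) :
    upsilon (srGraph n) H = 1 := by
  have h1 : (1:ℕ) ∈ {m | ∃ X : Set (Fin (n+2)), X.Finite ∧ Nat.card X = m ∧
      KCover (srGraph n) H X} := by
    refine ⟨{⟨0, by omega⟩}, Set.finite_singleton _, by simp, fun f hf => ?_⟩
    obtain ⟨k, hk⟩ := Finite.surjective_of_injective hf ⟨0, by omega⟩
    exact ⟨k, by rw [hk]; rfl⟩
  have h0 : (0:ℕ) ∉ {m | ∃ X : Set (Fin (n+2)), X.Finite ∧ Nat.card X = m ∧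
      KCover (srGraph n) H X} := by
    rintro ⟨X, hfin, hcard, hcov⟩
    haveI := hfin.fintype
    have hXe : X = ∅ := Set.isEmpty_coe_sort.mp (Fintype.card_eq_zero_iff.mp
      (by rwa [Nat.card_eq_fintype_card] at hcard))
    obtain ⟨k, hk⟩ := hcov f0 hf0
    rw [hXe] at hk
    exact hk
  have hmem := Nat.sInf_mem (⟨1, h1⟩ : Set.Nonempty _)
  have hle := Nat.sInf_le h1
  have hne0 : sInf {m | ∃ X : Set (Fin (n+2)), X.Finite ∧ Nat.card X = m ∧
      KCover (srGraph n) H X} ≠ 0 := fun h => h0 (h ▸ hmem)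
  rw [upsilon]
  omega

lemma closed_eq_univ {V : Type} {G : SimpleGraph V} (hconn : G.Connected) (C : Finset V)
    (hne : C.Nonempty) (hcl : ∀ z ∈ C, ∀ w, G.Adj z w → w ∈ C) : ∀ w, w ∈ C := by
  obtain ⟨z0, hz0⟩ := hne
  intro w
  have key : ∀ (a b : V) (p : G.Walk a b), a ∈ C → b ∈ C := by
    intro a b p
    induction p with
    | nil => exact id
    | cons h p ih => exact fun ha => ih (hcl _ ha _ h)
  obtain ⟨p⟩ := hconn.preconnected z0 w
  exact key z0 w p hz0

lemma aut_image_nb {V : Type} [Fintype V] [DecidableEq V] {G : SimpleGraph V}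
    [DecidableRel G.Adj] (g : G ≃g G) (v : V) :
    (G.neighborFinset v).image g = G.neighborFinset (g v) := by
  ext w
  simp only [Finset.mem_image, mem_neighborFinset]
  constructor
  · rintro ⟨z, hz, rfl⟩
    exact g.map_rel_iff.mpr hz
  · intro h
    refine ⟨g.symm w, ?_, by simp⟩
    have : G.Adj (g v) (g (g.symm w)) := by simpa using h
    exact g.map_rel_iff.mp this

lemma degree_eq_of_vt {V : Type} [Fintype V] [DecidableEq V] {G : SimpleGraph V}
    [DecidableRel G.Adj] (htr : VertexTransitive G) (u v : V) :
    G.degree u = G.degree v := by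
  obtain ⟨g, hg⟩ := htr u v
  rw [← hg, degree, degree, ← aut_image_nb g u,
    Finset.card_image_of_injective _ (EquivLike.injective g)]

/-- Counting/averaging: if `|V| = (n+2)·|X|` for a cover `X` of a vertex-transitive graph,
then every injective copy of `sr_n` meets `X` in exactly one vertex. -/
lemma honce_lemma {n : ℕ} {V : Type} [Fintype V] [DecidableEq V] (G : SimpleGraph V)
    (htr : VertexTransitive G) (X : Finset V) (t : ℕ) (hXc : X.card = t)
    (hcov : ∀ f : srGraph n →g G, Function.Injective f → ∃ k, f k ∈ X)
    (hV : Fintype.card V = (n+2) * t) :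
    ∀ f : srGraph n →g G, Function.Injective f → ∀ x ∈ X, ∀ y ∈ X,
      (∃ k, f k = x) → (∃ k', f k' = y) → x = y := by
  classical
  intro f hf x hx y hy hkx hky
  obtain ⟨k, hk⟩ := hkx
  obtain ⟨k', hk'⟩ := hky
  by_contra hxy
  haveI : Finite (G ≃g G) := aut_finite G
  haveI : Fintype (G ≃g G) := Fintype.ofFinite _
  -- the number of automorphisms sending z to v is independent of v
  have hconst : ∀ (z v v' : V),
      (Finset.univ.filter (fun g : G ≃g G => g z = v)).card =
      (Finset.univ.filter (fun g : G ≃g G => g z = v')).card := by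
    intro z v v'
    obtain ⟨g1, hg1⟩ := htr v v'
    refine Finset.card_bij' (fun g _ => g.trans g1) (fun g _ => g.trans g1.symm) ?_ ?_ ?_ ?_
    · intro g hg
      simp only [Finset.mem_filter, Finset.mem_univ, true_and] at hg ⊢
      show g1 (g z) = v'
      rw [hg, hg1]
    · intro g hg
      simp only [Finset.mem_filter, Finset.mem_univ, true_and] at hg ⊢
      show g1.symm (g z) = v
      rw [hg, ← hg1]
      simp
    · intro g hg
      ext p
      simp
    · intro g hg
      ext p
      simp
  have hsum_z : ∀ z : V, ∑ v : V, (Finset.univ.filter (fun g : G ≃g G => g z = v)).card =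
      Fintype.card (G ≃g G) := by
    intro z
    rw [← Finset.card_univ]
    exact (Finset.card_eq_sum_card_fiberwise (fun g _ => Finset.mem_univ (g z))).symm
  have hcA : ∀ (z v : V),
      Fintype.card V * (Finset.univ.filter (fun g : G ≃g G => g z = v)).card =
      Fintype.card (G ≃g G) := by
    intro z v
    rw [← hsum_z z]
    rw [Finset.sum_congr rfl (fun v' _ => hconst z v' v), Finset.sum_const, Finset.card_univ,
      smul_eq_mul]
  set N : (G ≃g G) → ℕ :=
    fun g => (Finset.univ.filter (fun kk : Fin (n+2) => g.symm (f kk) ∈ X)).card with hN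
  have hN1 : ∀ g, 1 ≤ N g := by
    intro g
    have hinj' : Function.Injective (g.symm.toHom.comp f) :=
      (EquivLike.injective g.symm).comp hf
    obtain ⟨kk, hkk⟩ := hcov (g.symm.toHom.comp f) hinj'
    have : kk ∈ Finset.univ.filter (fun kk : Fin (n+2) => g.symm (f kk) ∈ X) := by
      simp only [Finset.mem_filter, Finset.mem_univ, true_and]
      exact hkk
    exact Finset.card_pos.mpr ⟨kk, this⟩
  have hN2 : 2 ≤ N ((Iso.refl : G ≃g G)) := by
    apply Finset.one_lt_card.mpr
    refine ⟨k, ?_, k', ?_, ?_⟩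
    · simp only [Finset.mem_filter, Finset.mem_univ, true_and]
      show ((Iso.refl : G ≃g G)).symm (f k) ∈ X
      simpa [hk] using hx
    · simp only [Finset.mem_filter, Finset.mem_univ, true_and]
      show ((Iso.refl : G ≃g G)).symm (f k') ∈ X
      simpa [hk'] using hy
    · intro hkk
      exact hxy (by rw [← hk, ← hk', hkk])
  have htot : Fintype.card V * (∑ g : G ≃g G, N g) =
      Fintype.card V * Fintype.card (G ≃g G) := by
    have h1 : ∀ g : G ≃g G, N g = ∑ kk : Fin (n+2), if g.symm (f kk) ∈ X then 1 else 0 := by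
      intro g
      simp only [hN]
      rw [Finset.card_filter]
    have h2 : (∑ g : G ≃g G, N g) =
        ∑ kk : Fin (n+2), (Finset.univ.filter (fun g : G ≃g G => g.symm (f kk) ∈ X)).card := by
      rw [Finset.sum_congr rfl (fun g _ => h1 g), Finset.sum_comm]
      exact Finset.sum_congr rfl (fun kk _ => (Finset.card_filter _ _).symm)
    have h3 : ∀ kk : Fin (n+2),
        (Finset.univ.filter (fun g : G ≃g G => g.symm (f kk) ∈ X)).card =
        ∑ b ∈ X, (Finset.univ.filter (fun g : G ≃g G => g b = f kk)).card := by
      intro kk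
      rw [Finset.card_eq_sum_card_fiberwise
        (f := fun g : G ≃g G => g.symm (f kk)) (t := X)
        (s := Finset.univ.filter (fun g : G ≃g G => g.symm (f kk) ∈ X))
        (fun g hg => (Finset.mem_filter.mp hg).2)]
      refine Finset.sum_congr rfl (fun b hb => ?_)
      congr 1
      ext g
      simp only [Finset.mem_filter, Finset.mem_univ, true_and]
      constructor
      · rintro ⟨h1', h2'⟩
        rw [← h2']
        simp
      · intro h
        constructor
        · rw [← h]; simp; exact hb
        · rw [← h]; simp
    rw [h2, Finset.mul_sum]
    rw [Finset.sum_congr rfl (fun kk _ => by rw [h3 kk, Finset.mul_sum,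
      Finset.sum_congr rfl (fun b _ => hcA b (f kk)), Finset.sum_const, smul_eq_mul])]
    rw [Finset.sum_const, smul_eq_mul, Finset.card_univ, Fintype.card_fin, hXc, ← mul_assoc, ← hV]
  have hVpos : 0 < Fintype.card V := Fintype.card_pos_iff.mpr ⟨x⟩
  have hsum_eq : (∑ g : G ≃g G, N g) = Fintype.card (G ≃g G) :=
    Nat.eq_of_mul_eq_mul_left hVpos htot
  have hlt : Fintype.card (G ≃g G) < ∑ g : G ≃g G, N g := by
    calc Fintype.card (G ≃g G) = ∑ _g : G ≃g G, 1 := by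
          rw [Finset.sum_const, smul_eq_mul, mul_one, Finset.card_univ]
      _ < ∑ g : G ≃g G, N g :=
          Finset.sum_lt_sum (fun g _ => hN1 g) ⟨(Iso.refl : G ≃g G), Finset.mem_univ _, hN2⟩
  omega

lemma kPrime_adj {m : ℕ} (x y : Fin m) :
    (kPrime m).Adj x y ↔ x ≠ y ∧ x.val / 2 ≠ y.val / 2 := by
  rw [kPrime, fromRel_adj]
  constructor
  · rintro ⟨h1, h2 | h2⟩
    · exact ⟨h1, h2⟩
    · exact ⟨h1, fun h => h2 h.symm⟩
  · rintro ⟨h1, h2⟩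
    exact ⟨h1, Or.inl h2⟩

lemma pairing_lemma {V : Type} [DecidableEq V] (μ : V → V)
    (hinv : ∀ v, μ (μ v) = v) (hne : ∀ v, μ v ≠ v) :
    ∀ (k : ℕ) (s : Finset V), (∀ v ∈ s, μ v ∈ s) → s.card = 2 * k →
    ∃ f : V → ℕ, (∀ v ∈ s, f v < 2*k) ∧
      (∀ v ∈ s, ∀ w ∈ s, f v = f w → v = w) ∧
      (∀ v ∈ s, f (μ v) / 2 = f v / 2) := by
  intro k
  induction k with
  | zero =>
    intro s hs hcard
    have hse : s = ∅ := Finset.card_eq_zero.mp (by omega)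
    refine ⟨fun _ => 0, ?_, ?_, ?_⟩ <;> intro v hv <;> simp_all
  | succ k ih =>
    intro s hclosed hcard
    obtain ⟨v0, hv0⟩ : s.Nonempty := Finset.card_pos.mp (by omega)
    have hμv0 : μ v0 ∈ s := hclosed v0 hv0
    set s' := (s.erase v0).erase (μ v0) with hs'
    have hs'card : s'.card = 2 * k := by
      rw [hs', Finset.card_erase_of_mem (Finset.mem_erase.mpr ⟨hne v0, hμv0⟩),
        Finset.card_erase_of_mem hv0, hcard]
      omega
    have hs'mem : ∀ v, v ∈ s' ↔ (v ∈ s ∧ v ≠ v0 ∧ v ≠ μ v0) := by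
      intro v
      rw [hs', Finset.mem_erase, Finset.mem_erase]
      tauto
    have hs'closed : ∀ v ∈ s', μ v ∈ s' := by
      intro v hv
      rw [hs'mem] at hv ⊢
      refine ⟨hclosed v hv.1, ?_, ?_⟩
      · intro h
        exact hv.2.2 (by rw [← hinv v, h])
      · intro h
        exact hv.2.1 (by have := congrArg μ h; rwa [hinv, hinv] at this)
    obtain ⟨f', hb', hi', hp'⟩ := ih s' hs'closed hs'card
    set F : V → ℕ := fun v => if v = v0 then 2*k else if v = μ v0 then 2*k+1 else f' v with hF
    have hFv0 : F v0 = 2*k := by simp [hF]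
    have hFμ : F (μ v0) = 2*k+1 := by simp [hF, hne v0]
    have hFs' : ∀ v ∈ s', F v = f' v := by
      intro v hv
      rw [hs'mem] at hv
      simp [hF, hv.2.1, hv.2.2]
    have htri : ∀ v ∈ s, v = v0 ∨ v = μ v0 ∨ v ∈ s' := by
      intro v hv
      by_cases h1 : v = v0
      · exact Or.inl h1
      by_cases h2 : v = μ v0
      · exact Or.inr (Or.inl h2)
      · exact Or.inr (Or.inr ((hs'mem v).mpr ⟨hv, h1, h2⟩))
    refine ⟨F, ?_, ?_, ?_⟩
    · intro v hv
      rcases htri v hv with h | h | h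
      · rw [h, hFv0]; omega
      · rw [h, hFμ]; omega
      · rw [hFs' v h]; have := hb' v h; omega
    · intro v hv w hw hfvw
      rcases htri v hv with h1 | h1 | h1 <;> rcases htri w hw with h2 | h2 | h2
      · rw [h1, h2]
      · exfalso; rw [h1, h2, hFv0, hFμ] at hfvw; omega
      · exfalso; rw [h1, hFv0, hFs' w h2] at hfvw; have := hb' w h2; omega
      · exfalso; rw [h1, h2, hFμ, hFv0] at hfvw; omega
      · rw [h1, h2]
      · exfalso; rw [h1, hFμ, hFs' w h2] at hfvw; have := hb' w h2; omega
      · exfalso; rw [h2, hFv0, hFs' v h1] at hfvw; have := hb' v h1; omega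
      · exfalso; rw [h2, hFμ, hFs' v h1] at hfvw; have := hb' v h1; omega
      · exact hi' v h1 w h2 (by rw [hFs' v h1, hFs' w h2] at hfvw; exact hfvw)
    · intro v hv
      rcases htri v hv with h | h | h
      · rw [h, hFv0, hFμ]; omega
      · rw [h, hinv v0, hFv0, hFμ]; omega
      · rw [hFs' v h, hFs' (μ v) (hs'closed v h)]
        exact hp' v h


lemma part1 (n : ℕ) (hn : 4 ≤ n) (heven : Even n) (V : Type) (iV : Fintype V)
    (G : SimpleGraph V)
    (hconn : G.Connected) (htr : VertexTransitive G)
    (heq : upsilonSym (srGraph n) G = (n + 2) * upsilon (srGraph n) G)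
    (hpos : 0 < upsilonSym (srGraph n) G) :
    Nonempty (G ≃g (⊤ : SimpleGraph (Fin (n + 2)))) ∨ Nonempty (G ≃g kPrime (n + 2)) := by
  classical
  letI : DecidableRel G.Adj := Classical.decRel _
  obtain ⟨f0, hf0⟩ := exists_copy_of_pos G hpos
  have hsym : upsilonSym (srGraph n) G = Fintype.card V := upsilonSym_eq_card G htr f0 hf0
  set t := upsilon (srGraph n) G with htdef
  have hV : Fintype.card V = (n+2) * t := by rw [← hsym, heq]
  obtain ⟨Xs, hXfin, hXcard, hXcov⟩ := upsilon_spec (n := n) G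
  set X : Finset V := hXfin.toFinset with hXdef
  have hXmem : ∀ v, v ∈ X ↔ v ∈ Xs := fun v => Set.Finite.mem_toFinset hXfin
  have hXc : X.card = t := by
    rw [htdef, ← hXcard, Nat.card_coe_set_eq, Set.ncard_eq_toFinset_card Xs hXfin]
  have hcovF : ∀ f : srGraph n →g G, Function.Injective f → ∃ k, f k ∈ X := by
    intro f hf
    obtain ⟨k, hk⟩ := hXcov f hf
    exact ⟨k, (hXmem _).mpr hk⟩
  have tpos : 0 < t := by
    rcases Nat.eq_zero_or_pos t with h | h
    · exfalso
      rw [h, mul_zero] at hV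
      have h2 : (Finset.univ : Finset V).card = 0 := by rw [Finset.card_univ, hV]
      have h3 := Finset.card_pos.mpr ⟨f0 ⟨0, by omega⟩, Finset.mem_univ _⟩
      omega
    · exact h
  have honce := honce_lemma G htr X t hXc hcovF hV
  -- every vertex is the centre of a copy
  have copyAt : ∀ v, ∃ f : srGraph n →g G, Function.Injective f ∧ f ⟨0, by omega⟩ = v := by
    intro v
    obtain ⟨g, hg⟩ := htr (f0 ⟨0, by omega⟩) v
    refine ⟨g.toHom.comp f0, (EquivLike.injective g).comp hf0, ?_⟩
    show g (f0 ⟨0, by omega⟩) = v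
    exact hg
  -- minimum degree at least n
  have hdeg : ∀ v, n ≤ G.degree v := by
    intro v
    obtain ⟨f, hf, hfv⟩ := copyAt v
    have hsub : (Finset.univ : Finset (Fin n)).image
        (fun i : Fin n => f ⟨i.val + 1, by omega⟩) ⊆ G.neighborFinset v := by
      intro w hw
      obtain ⟨i, _, hi⟩ := Finset.mem_image.mp hw
      rw [mem_neighborFinset, ← hfv, ← hi]
      exact f.map_adj (sr_adj_center _ (by show 1 ≤ i.val + 1; omega)
        (by show i.val + 1 ≤ n; omega))
    have hcard : ((Finset.univ : Finset (Fin n)).image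
        (fun i : Fin n => f ⟨i.val + 1, by omega⟩)).card = n := by
      rw [Finset.card_image_of_injective _ (fun a b hab => by
        have := hf hab
        exact Fin.ext (by have := congrArg Fin.val this; simp at this; omega))]
      simp
    calc n = _ := hcard.symm
      _ ≤ _ := Finset.card_le_card hsub
  
  -- main contradiction: t = 1
  have hmain : t = 1 := by
    by_contra ht1
    have ht2 : 2 ≤ t := by omega
    have hVbig : 2 * (n + 2) ≤ Fintype.card V := by
      rw [hV, mul_comm]
      exact Nat.mul_le_mul_left _ ht2
    obtain ⟨x0, hx0, y0, hy0, hxy0⟩ := Finset.one_lt_card.mp (by omega : 1 < X.card)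
    -- the escape lemma
    have esc : ∀ u : V, ∃ l w, G.Adj u l ∧ G.Adj l w ∧ ¬ G.Adj u w ∧ w ≠ u := by
      intro u
      by_contra hno
      push_neg at hno
      have hcl : ∀ z ∈ insert u (G.neighborFinset u), ∀ w, G.Adj z w →
          w ∈ insert u (G.neighborFinset u) := by
        intro z hz w hzw
        rcases Finset.mem_insert.mp hz with rfl | hz
        · exact Finset.mem_insert_of_mem ((mem_neighborFinset _ _ _).mpr hzw)
        · by_cases hw : G.Adj u w
          · exact Finset.mem_insert_of_mem ((mem_neighborFinset _ _ _).mpr hw)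
          · have := hno z w ((mem_neighborFinset _ _ _).mp hz) hzw hw
            rw [this]; exact Finset.mem_insert_self _ _
      have huniv := closed_eq_univ hconn _ ⟨u, Finset.mem_insert_self _ _⟩ hcl
      have hdu : G.degree u = Fintype.card V - 1 := by
        have h1 : Fintype.card V ≤ 1 + G.degree u := by
          calc Fintype.card V = (Finset.univ : Finset V).card := Finset.card_univ.symm
            _ ≤ (insert u (G.neighborFinset u)).card :=
                Finset.card_le_card (fun w _ => huniv w)
            _ ≤ 1 + G.degree u := by
                rw [SimpleGraph.degree, add_comm]; exact Finset.card_insert_le _ _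
        have h2 := G.degree_lt_card_verts u
        omega
      have hcomp : ∀ a b : V, a ≠ b → G.Adj a b := by
        intro a b hab
        have hda : G.degree a = Fintype.card V - 1 := by
          rw [degree_eq_of_vt htr a u, hdu]
        have hnb : G.neighborFinset a = Finset.univ.erase a := by
          apply Finset.eq_of_subset_of_card_le
          · intro w hw
            exact Finset.mem_erase.mpr
              ⟨(G.ne_of_adj ((mem_neighborFinset _ _ _).mp hw)).symm, Finset.mem_univ _⟩
          · rw [Finset.card_erase_of_mem (Finset.mem_univ _), Finset.card_univ]
            rw [SimpleGraph.degree] at hda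
            omega
        have : b ∈ G.neighborFinset a := by
          rw [hnb]; exact Finset.mem_erase.mpr ⟨hab.symm, Finset.mem_univ _⟩
        exact (mem_neighborFinset _ _ _).mp this
      -- a copy through x0 and y0
      have hy0x0 : y0 ∈ Finset.univ.erase x0 :=
        Finset.mem_erase.mpr ⟨fun h => hxy0 h.symm, Finset.mem_univ _⟩
      obtain ⟨L, hLsub, hLsub2, hLcard⟩ := Finset.exists_subsuperset_card_eq (n := n)
        (Finset.singleton_subset_iff.mpr hy0x0)
        (by simp; omega)
        (by rw [Finset.card_erase_of_mem (Finset.mem_univ _), Finset.card_univ]; omega)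
      have hwex : (Finset.univ \ insert x0 L).Nonempty := by
        rw [← Finset.card_pos, Finset.card_sdiff_of_subset (Finset.subset_univ _), Finset.card_univ]
        have h4 : (insert x0 L).card ≤ n + 1 := by
          calc _ ≤ L.card + 1 := Finset.card_insert_le _ _
            _ = n + 1 := by rw [hLcard]
        omega
      obtain ⟨w, hwmem⟩ := hwex
      rw [Finset.mem_sdiff, Finset.mem_insert] at hwmem
      push_neg at hwmem
      obtain ⟨-, hwx0, hwL⟩ := hwmem
      have hy0L : y0 ∈ L := hLsub (Finset.mem_singleton_self y0)
      obtain ⟨f, hfinj, hf00, hfT, hfrange, hfL⟩ := mkCopy hn G x0 w L hLcard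
        (fun l hl => hcomp x0 l (fun h => (Finset.mem_erase.mp (hLsub2 hl)).1 h.symm))
        y0 hy0L
        (hcomp y0 w (fun h => hwL (h ▸ hy0L)))
        hwx0 hwL
      exact hxy0 (honce f hfinj x0 hx0 y0 hy0 ⟨_, hf00⟩ (hfL y0 hy0L))
    have card2 : ∀ a b : V, ({a, b} : Finset V).card ≤ 2 := by
      intro a b
      refine le_trans (Finset.card_insert_le _ _) ?_
      have : ({b} : Finset V).card = 1 := Finset.card_singleton b
      omega
    have card2n : ∀ a b : V, ({a, b} : Finset V).card ≤ n :=
      fun a b => le_trans (card2 a b) (by omega)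
    have card3 : ∀ a b c : V, ({a, b, c} : Finset V).card ≤ n := by
      intro a b c
      refine le_trans (Finset.card_insert_le _ _) ?_
      have := card2 b c
      omega
    -- distance ≥ 2 between X-vertices
    have far1 : ∀ x ∈ X, ∀ y ∈ X, G.Adj x y → x = y := by
      intro x hx y hy hadj
      by_contra hxy
      obtain ⟨l, w, hul, hlw, hnuw, hwu⟩ := esc x
      have hset : ({y, l} : Finset V) ⊆ G.neighborFinset x := by
        intro z hz
        rcases Finset.mem_insert.mp hz with rfl | hz
        · exact (mem_neighborFinset _ _ _).mpr hadj
        · rw [Finset.mem_singleton.mp hz]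
          exact (mem_neighborFinset _ _ _).mpr hul
      obtain ⟨L, hLsub, hLsub2, hLcard⟩ := Finset.exists_subsuperset_card_eq hset
        (card2n _ _) (hdeg x)
      have hlL : l ∈ L := hLsub (by simp)
      have hyL : y ∈ L := hLsub (by simp)
      have hwL : w ∉ L := fun h => hnuw ((mem_neighborFinset _ _ _).mp (hLsub2 h))
      obtain ⟨f, hfinj, hf00, hfT, hfrange, hfL⟩ := mkCopy hn G x w L hLcard
        (fun l' hl' => (mem_neighborFinset _ _ _).mp (hLsub2 hl')) l hlL hlw hwu hwL
      exact hxy (honce f hfinj x hx y hy ⟨_, hf00⟩ (hfL y hyL))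
    have far2 : ∀ x ∈ X, ∀ y ∈ X, ∀ u, G.Adj u x → G.Adj u y → x = y := by
      intro x hx y hy u hux huy
      by_contra hxy
      obtain ⟨l, w, hul, hlw, hnuw, hwu⟩ := esc u
      have hset : ({x, y, l} : Finset V) ⊆ G.neighborFinset u := by
        intro z hz
        rcases Finset.mem_insert.mp hz with rfl | hz
        · exact (mem_neighborFinset _ _ _).mpr hux
        rcases Finset.mem_insert.mp hz with rfl | hz
        · exact (mem_neighborFinset _ _ _).mpr huy
        · rw [Finset.mem_singleton.mp hz]
          exact (mem_neighborFinset _ _ _).mpr hul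
      obtain ⟨L, hLsub, hLsub2, hLcard⟩ := Finset.exists_subsuperset_card_eq hset
        (card3 _ _ _) (hdeg u)
      have hlL : l ∈ L := hLsub (by simp)
      have hxL : x ∈ L := hLsub (by simp)
      have hyL : y ∈ L := hLsub (by simp)
      have hwL : w ∉ L := fun h => hnuw ((mem_neighborFinset _ _ _).mp (hLsub2 h))
      obtain ⟨f, hfinj, hf00, hfT, hfrange, hfL⟩ := mkCopy hn G u w L hLcard
        (fun l' hl' => (mem_neighborFinset _ _ _).mp (hLsub2 hl')) l hlL hlw hwu hwL
      exact hxy (honce f hfinj x hx y hy (hfL x hxL) (hfL y hyL))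
    have far3 : ∀ x ∈ X, ∀ y ∈ X, ∀ a b, G.Adj x a → G.Adj a b → G.Adj b y → x = y := by
      intro x hx y hy a b hxa hab hby
      by_contra hxy
      by_cases hbx : b = x
      · exact hxy (far1 x hx y hy (hbx ▸ hby))
      by_cases hadjxb : G.Adj x b
      · exact hxy (far2 x hx y hy b hadjxb.symm hby)
      by_cases hay : a = y
      · exact hxy (far1 x hx y hy (hay ▸ hxa))
      -- centre b, leaves ⊇ {a, y}, tail x on leaf a
      have hset : ({a, y} : Finset V) ⊆ G.neighborFinset b := by
        intro z hz
        rcases Finset.mem_insert.mp hz with rfl | hz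
        · exact (mem_neighborFinset _ _ _).mpr hab.symm
        · rw [Finset.mem_singleton.mp hz]
          exact (mem_neighborFinset _ _ _).mpr hby
      obtain ⟨L, hLsub, hLsub2, hLcard⟩ := Finset.exists_subsuperset_card_eq hset
        (card2n _ _) (hdeg b)
      have haL : a ∈ L := hLsub (by simp)
      have hyL : y ∈ L := hLsub (by simp)
      have hxL : x ∉ L := fun h => hadjxb (((mem_neighborFinset _ _ _).mp (hLsub2 h)).symm)
      obtain ⟨f, hfinj, hf00, hfT, hfrange, hfL⟩ := mkCopy hn G b x L hLcard
        (fun l' hl' => (mem_neighborFinset _ _ _).mp (hLsub2 hl')) a haL hxa.symm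
        (fun h => hbx h.symm) hxL
      exact hxy (honce f hfinj x hx y hy ⟨_, hfT⟩ (hfL y hyL))
    -- disjoint closed neighbourhoods of X-vertices
    have hdisj : ∀ x ∈ X, ∀ y ∈ X, x ≠ y →
        Disjoint (insert x (G.neighborFinset x)) (insert y (G.neighborFinset y)) := by
      intro x hx y hy hxy
      rw [Finset.disjoint_left]
      intro z hzx hzy
      rcases Finset.mem_insert.mp hzx with hzx | hzx <;>
        rcases Finset.mem_insert.mp hzy with hzy | hzy
      · exact hxy (hzx.symm.trans hzy)
      · exact hxy ((far1 y hy x hx (by rw [← hzx]; exact (mem_neighborFinset _ _ _).mp hzy)).symm)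
      · exact hxy (far1 x hx y hy (by rw [← hzy]; exact (mem_neighborFinset _ _ _).mp hzx))
      · exact hxy (far2 x hx y hy z ((mem_neighborFinset _ _ _).mp hzx).symm
          ((mem_neighborFinset _ _ _).mp hzy).symm)
    have hterm : ∀ x : V, (insert x (G.neighborFinset x)).card = G.degree x0 + 1 := by
      intro x
      rw [Finset.card_insert_of_notMem
        (fun h => G.loopless.irrefl x ((mem_neighborFinset _ _ _).mp h))]
      rw [show (G.neighborFinset x).card = G.degree x from rfl, degree_eq_of_vt htr x x0]
    have hdegbound : G.degree x0 + 1 ≤ n + 2 := by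
      have hbi : (X.biUnion (fun x => insert x (G.neighborFinset x))).card =
          t * (G.degree x0 + 1) := by
        rw [Finset.card_biUnion (fun x hx y hy hxy => hdisj x hx y hy hxy),
          Finset.sum_congr rfl (fun x _ => hterm x), Finset.sum_const, hXc, smul_eq_mul]
      have h1 : t * (G.degree x0 + 1) ≤ (n+2) * t := by
        rw [← hbi, ← hV, ← Finset.card_univ]
        exact Finset.card_le_card (Finset.subset_univ _)
      rw [mul_comm (n+2) t] at h1
      exact Nat.le_of_mul_le_mul_left h1 tpos
    have hd0 : n ≤ G.degree x0 := hdeg x0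
    rcases (by omega : G.degree x0 = n ∨ G.degree x0 = n + 1) with hΔ | hΔ
    · -- degree n case
      have hdall : ∀ v, G.degree v = n := fun v => by rw [degree_eq_of_vt htr v x0, hΔ]
      have hnb : ∀ u, (G.neighborFinset u).card = n :=
        fun u => by rw [show (G.neighborFinset u).card = G.degree u from rfl, hdall]
      have hbi : (X.biUnion (fun x => insert x (G.neighborFinset x))).card = t * (n+1) := by
        rw [Finset.card_biUnion (fun x hx y hy hxy => hdisj x hx y hy hxy),
          Finset.sum_congr rfl (fun x _ => hterm x), Finset.sum_const, hXc, smul_eq_mul, hΔ]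
      have hbig : t * (n + 1) < Fintype.card V := by
        rw [hV]
        calc t * (n+1) < t * (n+1) + t := by omega
          _ = t * (n+2) := by ring
          _ = (n+2) * t := by ring
      obtain ⟨v, hvout⟩ : ∃ v, v ∉ X.biUnion (fun x => insert x (G.neighborFinset x)) := by
        by_contra h
        push_neg at h
        have hsub : (Finset.univ : Finset V) ⊆ X.biUnion (fun x => insert x (G.neighborFinset x)) :=
          fun w _ => h w
        have := Finset.card_le_card hsub
        rw [Finset.card_univ] at this
        omega
      have hvX : v ∉ X := fun h => hvout (Finset.mem_biUnion.mpr ⟨v, h, Finset.mem_insert_self _ _⟩)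
      have hvadj : ∀ x ∈ X, ¬ G.Adj x v := fun x hx hadj => hvout (Finset.mem_biUnion.mpr
        ⟨x, hx, Finset.mem_insert_of_mem ((mem_neighborFinset _ _ _).mpr hadj)⟩)
      obtain ⟨l₁, w₁, hvl₁, hl₁w₁, hnvw₁, hw₁v⟩ := esc v
      have hl₁nb : l₁ ∈ G.neighborFinset v := (mem_neighborFinset _ _ _).mpr hvl₁
      have hw₁nb : w₁ ∉ G.neighborFinset v := fun h => hnvw₁ ((mem_neighborFinset _ _ _).mp h)
      obtain ⟨x', hx', a, hva, hax'⟩ :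
          ∃ x' ∈ X, ∃ a, G.Adj v a ∧ G.Adj a x' := by
        obtain ⟨f, hfinj, hf00, hfT, hfrange, hfL⟩ := mkCopy hn G v w₁ (G.neighborFinset v)
          (hnb v) (fun l hl => (mem_neighborFinset _ _ _).mp hl) l₁ hl₁nb hl₁w₁ hw₁v hw₁nb
        obtain ⟨k, hk⟩ := hcovF f hfinj
        rcases hfrange k with h | h | h
        · exact absurd (h ▸ hk) hvX
        · exact ⟨w₁, h ▸ hk, l₁, hvl₁, hl₁w₁⟩
        · exact absurd ((mem_neighborFinset _ _ _).mp h).symm (hvadj (f k) hk)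
      have h7a : ∀ l ∈ G.neighborFinset v, ∀ w, G.Adj l w →
          w = v ∨ w ∈ G.neighborFinset v ∨ w ∈ X := by
        intro l hl w hlw
        by_cases h1 : w = v
        · exact Or.inl h1
        by_cases h2 : w ∈ G.neighborFinset v
        · exact Or.inr (Or.inl h2)
        by_cases h3 : w ∈ X
        · exact Or.inr (Or.inr h3)
        exfalso
        obtain ⟨f2, hf2inj, hf200, hf2T, hf2range, hf2L⟩ := mkCopy hn G v w (G.neighborFinset v)
          (hnb v) (fun l' hl' => (mem_neighborFinset _ _ _).mp hl') l hl hlw h1 h2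
        obtain ⟨k2, hk2⟩ := hcovF f2 hf2inj
        rcases hf2range k2 with h | h | h
        · exact hvX (h ▸ hk2)
        · exact h3 (h ▸ hk2)
        · exact hvadj (f2 k2) hk2 ((mem_neighborFinset _ _ _).mp h).symm
      have hminv : ∀ l ∈ G.neighborFinset v,
          n - 2 ≤ (G.neighborFinset l ∩ G.neighborFinset v).card := by
        intro l hl
        have hsub : G.neighborFinset l ⊆
            (G.neighborFinset l ∩ G.neighborFinset v) ∪ {v} ∪ (G.neighborFinset l ∩ X) := by
          intro w hw
          rcases h7a l hl w ((mem_neighborFinset _ _ _).mp hw) with h | h | h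
          · exact Finset.mem_union_left _ (Finset.mem_union_right _ (by simp [h]))
          · exact Finset.mem_union_left _ (Finset.mem_union_left _ (Finset.mem_inter.mpr ⟨hw, h⟩))
          · exact Finset.mem_union_right _ (Finset.mem_inter.mpr ⟨hw, h⟩)
        have hXle : (G.neighborFinset l ∩ X).card ≤ 1 := by
          apply Finset.card_le_one.mpr
          intro a1 h1 a2 h2
          rw [Finset.mem_inter] at h1 h2
          exact far2 a1 h1.2 a2 h2.2 l ((mem_neighborFinset _ _ _).mp h1.1)
            ((mem_neighborFinset _ _ _).mp h2.1)
        have h1 := Finset.card_le_card hsub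
        have h2 := Finset.card_union_le
          ((G.neighborFinset l ∩ G.neighborFinset v) ∪ {v}) (G.neighborFinset l ∩ X)
        have h3 := Finset.card_union_le (G.neighborFinset l ∩ G.neighborFinset v) ({v} : Finset V)
        have h4 : ({v} : Finset V).card = 1 := Finset.card_singleton v
        have h5 := hnb l
        omega
      have hmin : ∀ u, ∀ b ∈ G.neighborFinset u,
          n - 2 ≤ (G.neighborFinset b ∩ G.neighborFinset u).card := by
        intro u b hb
        obtain ⟨g, hg⟩ := htr v u
        have hub : G.Adj u b := (mem_neighborFinset _ _ _).mp hb
        have hlnb : g.symm b ∈ G.neighborFinset v := by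
          refine (mem_neighborFinset _ _ _).mpr ?_
          have h1 : G.Adj (g v) b := hg ▸ hub
          have h2 : G.Adj (g v) (g (g.symm b)) := by simpa using h1
          exact g.map_rel_iff.mp h2
        have himg : (G.neighborFinset (g.symm b) ∩ G.neighborFinset v).image g ⊆
            G.neighborFinset b ∩ G.neighborFinset u := by
          intro z hz
          obtain ⟨z0, hz0, rfl⟩ := Finset.mem_image.mp hz
          rw [Finset.mem_inter] at hz0
          have hadj1 : G.Adj (g.symm b) z0 := (mem_neighborFinset _ _ _).mp hz0.1
          have hadj2 : G.Adj v z0 := (mem_neighborFinset _ _ _).mp hz0.2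
          rw [Finset.mem_inter]
          constructor
          · refine (mem_neighborFinset _ _ _).mpr ?_
            have := g.map_rel_iff.mpr hadj1
            simpa using this
          · refine (mem_neighborFinset _ _ _).mpr ?_
            have := g.map_rel_iff.mpr hadj2
            rwa [hg] at this
        calc n - 2 ≤ (G.neighborFinset (g.symm b) ∩ G.neighborFinset v).card := hminv _ hlnb
          _ = ((G.neighborFinset (g.symm b) ∩ G.neighborFinset v).image g).card :=
              (Finset.card_image_of_injective _ (EquivLike.injective g)).symm
          _ ≤ _ := Finset.card_le_card himg
      have hanb : a ∈ G.neighborFinset v := (mem_neighborFinset _ _ _).mpr hva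
      have hNa : ∀ w, G.Adj a w → w = v ∨ w ∈ G.neighborFinset v ∨ w = x' := by
        intro w hw
        rcases h7a a hanb w hw with h | h | h
        · exact Or.inl h
        · exact Or.inr (Or.inl h)
        · exact Or.inr (Or.inr (far2 w h x' hx' a hw hax'))
      set Sh := G.neighborFinset x' ∩ G.neighborFinset v with hShdef
      have hvx'1 : ¬ G.Adj x' v := hvadj x' hx'
      have haSh : a ∈ Sh := Finset.mem_inter.mpr ⟨(mem_neighborFinset _ _ _).mpr hax'.symm, hanb⟩
      have hSh : n - 1 ≤ Sh.card := by
        have hins : insert a (G.neighborFinset a ∩ G.neighborFinset x') ⊆ Sh := by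
          intro z hz
          rcases Finset.mem_insert.mp hz with hz | hz
          · exact hz ▸ haSh
          · rw [Finset.mem_inter] at hz
            have hadjaz : G.Adj a z := (mem_neighborFinset _ _ _).mp hz.1
            rcases hNa z hadjaz with h | h | h
            · have hax : G.Adj x' z := (mem_neighborFinset _ _ _).mp hz.2
              exact absurd (h ▸ hax) hvx'1
            · exact Finset.mem_inter.mpr ⟨hz.2, h⟩
            · have hax : G.Adj x' z := (mem_neighborFinset _ _ _).mp hz.2
              exact absurd (h ▸ hax) (G.loopless.irrefl x')
        have hnotm : a ∉ G.neighborFinset a ∩ G.neighborFinset x' :=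
          fun h => G.loopless.irrefl a ((mem_neighborFinset _ _ _).mp (Finset.mem_inter.mp h).1)
        have h1 := hmin x' a ((mem_neighborFinset _ _ _).mpr hax'.symm)
        have h2 := Finset.card_le_card hins
        rw [Finset.card_insert_of_notMem hnotm] at h2
        omega
      by_cases hcc : ∀ c ∈ G.neighborFinset x', c ∈ G.neighborFinset v
      · have hxv : G.neighborFinset x' = G.neighborFinset v :=
          Finset.eq_of_subset_of_card_le (fun c hc => hcc c hc) (by rw [hnb, hnb])
        set C := insert v (insert x' (G.neighborFinset v)) with hCdef
        have hvnb : v ∉ G.neighborFinset v := fun h => G.loopless.irrefl v ((mem_neighborFinset _ _ _).mp h)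
        have hx'nb : x' ∉ G.neighborFinset v := by
          rw [← hxv]
          exact fun h => G.loopless.irrefl x' ((mem_neighborFinset _ _ _).mp h)
        have hvx' : v ≠ x' := fun h => hvX (h ▸ hx')
        have hCcard : C.card = n + 2 := by
          rw [hCdef, Finset.card_insert_of_notMem (by simp [hvx', hvnb]),
            Finset.card_insert_of_notMem hx'nb, hnb]
        have hcl : ∀ z ∈ C, ∀ w, G.Adj z w → w ∈ C := by
          intro z hz w hzw
          have hwm : w ∈ G.neighborFinset z := (mem_neighborFinset _ _ _).mpr hzw
          rcases Finset.mem_insert.mp hz with rfl | hz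
          · exact Finset.mem_insert_of_mem (Finset.mem_insert_of_mem hwm)
          rcases Finset.mem_insert.mp hz with rfl | hz
          · rw [hxv] at hwm
            exact Finset.mem_insert_of_mem (Finset.mem_insert_of_mem hwm)
          · rcases h7a z hz w hzw with h | h | h
            · exact h ▸ Finset.mem_insert_self _ _
            · exact Finset.mem_insert_of_mem (Finset.mem_insert_of_mem h)
            · have hadjx'z : G.Adj x' z := (mem_neighborFinset _ _ _).mp (by rw [hxv]; exact hz)
              have hwx' : w = x' := far2 w h x' hx' z hzw hadjx'z.symm
              exact hwx' ▸ Finset.mem_insert_of_mem (Finset.mem_insert_self _ _)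
        have huniv := closed_eq_univ hconn C ⟨v, Finset.mem_insert_self _ _⟩ hcl
        have hle : Fintype.card V ≤ n + 2 := by
          rw [← Finset.card_univ, ← hCcard]
          exact Finset.card_le_card (fun w _ => huniv w)
        rw [hV] at hle
        have := Nat.mul_le_mul_left (n+2) ht2
        omega
      · push_neg at hcc
        obtain ⟨c, hcx', hcv⟩ := hcc
        have hShsub : Sh ⊆ G.neighborFinset x' := Finset.inter_subset_left
        have hShle : Sh.card ≤ n := by
          have := Finset.card_le_card hShsub
          rw [hnb x'] at this
          exact this
        have hsd : (G.neighborFinset x' \ Sh).card ≤ 1 := by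
          rw [Finset.card_sdiff_of_subset hShsub, hnb x']
          omega
        have hcsd : c ∈ G.neighborFinset x' \ Sh :=
          Finset.mem_sdiff.mpr ⟨hcx', fun h => hcv (Finset.mem_inter.mp h).2⟩
        have huniqc : ∀ z ∈ G.neighborFinset x', z ∉ G.neighborFinset v → z = c := by
          intro z hz hzv
          have hzsd : z ∈ G.neighborFinset x' \ Sh :=
            Finset.mem_sdiff.mpr ⟨hz, fun h => hzv (Finset.mem_inter.mp h).2⟩
          exact Finset.card_le_one.mp hsd z hzsd c hcsd
        have hmincx : n - 2 ≤ (G.neighborFinset c ∩ G.neighborFinset x').card := hmin x' c hcx'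
        have hempty : G.neighborFinset c ∩ G.neighborFinset x' = ∅ := by
          rw [Finset.eq_empty_iff_forall_notMem]
          intro z hz
          rw [Finset.mem_inter] at hz
          have hzc : G.Adj c z := (mem_neighborFinset _ _ _).mp hz.1
          have hzx' : z ∈ G.neighborFinset x' := hz.2
          have hznv : z ∈ G.neighborFinset v := by
            by_contra h
            exact G.loopless.irrefl c (by rw [huniqc z hzx' h] at hzc; exact hzc)
          rcases h7a z hznv c hzc.symm with h | h | h
          · exact (hvadj x' hx') (h ▸ (mem_neighborFinset _ _ _).mp hcx')
          · exact hcv h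
          · have hzx'adj : G.Adj z x' := ((mem_neighborFinset _ _ _).mp hzx').symm
            have hcx'eq : c = x' := far2 c h x' hx' z hzc.symm hzx'adj
            have hacx' : G.Adj x' c := (mem_neighborFinset _ _ _).mp hcx'
            exact G.loopless.irrefl x' (hcx'eq ▸ hacx')
        rw [hempty] at hmincx
        simp at hmincx
        omega
    · -- degree n+1 case
      have hdall : ∀ v, G.degree v = n+1 := fun v => by rw [degree_eq_of_vt htr v x0, hΔ]
      obtain ⟨v, hv⟩ := Finset.card_pos.mp
        (by rw [show (G.neighborFinset x0).card = G.degree x0 from rfl, hΔ]; omega)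
      have hadjx0v : G.Adj x0 v := (mem_neighborFinset _ _ _).mp hv
      set L := (G.neighborFinset v).erase x0 with hLdef
      have hx0nbv : x0 ∈ G.neighborFinset v := (mem_neighborFinset _ _ _).mpr hadjx0v.symm
      have hLcard : L.card = n := by
        rw [hLdef, Finset.card_erase_of_mem hx0nbv,
          show (G.neighborFinset v).card = G.degree v from rfl, hdall]
        omega
      have hLadj : ∀ l ∈ L, G.Adj v l :=
        fun l hl => (mem_neighborFinset _ _ _).mp (Finset.mem_of_mem_erase hl)
      have hvX : v ∉ X := fun hvX =>
        (G.ne_of_adj hadjx0v) (far1 x0 hx0 v hvX hadjx0v)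
      have hLX : ∀ l ∈ L, l ∉ X := by
        intro l hl hlX
        exact (Finset.mem_erase.mp hl).1
          (far2 x0 hx0 l hlX v hadjx0v.symm (hLadj l hl)).symm
      by_cases hA : ∃ l ∈ L, ∃ w, G.Adj l w ∧ w ∉ L ∧ w ≠ v ∧ w ≠ x0
      · obtain ⟨l, hlL, w, hlw, hwL, hwv, hwx0⟩ := hA
        obtain ⟨f, hfinj, hf00, hfT, hfrange, hfL⟩ :=
          mkCopy hn G v w L hLcard hLadj l hlL hlw hwv hwL
        obtain ⟨k, hk⟩ := hcovF f hfinj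
        rcases hfrange k with hkv | hkw | hkL
        · exact hvX (hkv ▸ hk)
        · have hwX : w ∈ X := hkw ▸ hk
          exact hwx0 (far3 x0 hx0 w hwX v l hadjx0v (hLadj l hlL) hlw).symm
        · exact hLX _ hkL hk
      · push_neg at hA
        set C := insert v (insert x0 L) with hCdef
        have hvL : v ∉ L := fun h => G.loopless.irrefl v (hLadj v h)
        have hx0L : x0 ∉ L := fun h => (Finset.mem_erase.mp h).1 rfl
        have hvx0 : v ≠ x0 := (G.ne_of_adj hadjx0v).symm
        have hCcard : C.card = n + 2 := by
          rw [hCdef, Finset.card_insert_of_notMem (by simp [hvx0, hvL]),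
            Finset.card_insert_of_notMem hx0L, hLcard]
        have hNl : ∀ l ∈ L, G.neighborFinset l = C.erase l := by
          intro l hl
          apply Finset.eq_of_subset_of_card_le
          · intro w hw
            have hadjw : G.Adj l w := (mem_neighborFinset _ _ _).mp hw
            refine Finset.mem_erase.mpr ⟨(G.ne_of_adj hadjw).symm, ?_⟩
            by_cases h1 : w ∈ L
            · exact Finset.mem_insert_of_mem (Finset.mem_insert_of_mem h1)
            by_cases h2 : w = v
            · exact h2 ▸ Finset.mem_insert_self _ _
            · rw [hA l hl w hadjw h1 h2]
              exact Finset.mem_insert_of_mem (Finset.mem_insert_self _ _)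
          · rw [Finset.card_erase_of_mem
              (Finset.mem_insert_of_mem (Finset.mem_insert_of_mem hl)), hCcard,
              show (G.neighborFinset l).card = G.degree l from rfl, hdall]
            omega
        have hlx0 : ∀ l ∈ L, G.Adj l x0 := by
          intro l hl
          have hmem : x0 ∈ C.erase l := Finset.mem_erase.mpr
            ⟨fun h => hx0L (h ▸ hl), Finset.mem_insert_of_mem (Finset.mem_insert_self _ _)⟩
          rw [← hNl l hl] at hmem
          exact (mem_neighborFinset _ _ _).mp hmem
        have hNx0 : G.neighborFinset x0 = insert v L := by
          apply (Finset.eq_of_subset_of_card_le ?_ ?_).symm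
          · intro w hw
            rcases Finset.mem_insert.mp hw with rfl | hw
            · exact (mem_neighborFinset _ _ _).mpr hadjx0v
            · exact (mem_neighborFinset _ _ _).mpr (hlx0 w hw).symm
          · rw [Finset.card_insert_of_notMem hvL, hLcard,
              show (G.neighborFinset x0).card = G.degree x0 from rfl, hΔ]
        have hNv : G.neighborFinset v = insert x0 L := by
          rw [hLdef, Finset.insert_erase hx0nbv]
        have hcl : ∀ z ∈ C, ∀ w, G.Adj z w → w ∈ C := by
          intro z hz w hzw
          have hwm : w ∈ G.neighborFinset z := (mem_neighborFinset _ _ _).mpr hzw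
          rcases Finset.mem_insert.mp hz with rfl | hz
          · rw [hNv] at hwm
            exact Finset.mem_insert_of_mem hwm
          rcases Finset.mem_insert.mp hz with rfl | hz
          · rw [hNx0] at hwm
            rcases Finset.mem_insert.mp hwm with rfl | hthis
            · exact Finset.mem_insert_self _ _
            · exact Finset.mem_insert_of_mem (Finset.mem_insert_of_mem hthis)
          · rw [hNl z hz] at hwm
            exact Finset.mem_of_mem_erase hwm
        have huniv := closed_eq_univ hconn C ⟨v, Finset.mem_insert_self _ _⟩ hcl
        have hle : Fintype.card V ≤ n + 2 := by
          rw [← Finset.card_univ, ← hCcard]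
          exact Finset.card_le_card (fun w _ => huniv w)
        rw [hV] at hle
        have := Nat.mul_le_mul_left (n+2) ht2
        omega
  -- now |V| = n + 2 and we classify
  have hcard : Fintype.card V = n + 2 := by rw [hV, hmain, mul_one]
  set v0 := f0 ⟨0, by omega⟩ with hv0def
  have hd0 : n ≤ G.degree v0 := hdeg _
  have hdub := G.degree_lt_card_verts v0
  rw [hcard] at hdub
  rcases (by omega : G.degree v0 = n ∨ G.degree v0 = n + 1) with hΔ | hΔ
  · -- K'_{n+2} case
    right
    have hdall : ∀ v, G.degree v = n := fun v => by rw [degree_eq_of_vt htr v v0, hΔ]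
    have hnon : ∀ v : V, ∃ w, Finset.univ \ insert v (G.neighborFinset v) = {w} := by
      intro v
      apply Finset.card_eq_one.mp
      rw [Finset.card_sdiff_of_subset (Finset.subset_univ _), Finset.card_univ, hcard,
        Finset.card_insert_of_notMem (fun h => G.loopless.irrefl v ((mem_neighborFinset _ _ _).mp h)),
        show (G.neighborFinset v).card = G.degree v from rfl, hdall]
      omega
    choose μ hμ using hnon
    have hμmem : ∀ v, μ v ∈ Finset.univ \ insert v (G.neighborFinset v) := by
      intro v
      rw [hμ v]
      exact Finset.mem_singleton_self _
    have hμne : ∀ v, μ v ≠ v := by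
      intro v
      have h := hμmem v
      rw [Finset.mem_sdiff, Finset.mem_insert] at h
      exact fun he => h.2 (Or.inl he)
    have hμnadj : ∀ v, ¬ G.Adj v (μ v) := by
      intro v h
      have h2 := hμmem v
      rw [Finset.mem_sdiff, Finset.mem_insert] at h2
      exact h2.2 (Or.inr ((mem_neighborFinset _ _ _).mpr h))
    have hμuniq : ∀ v w, w ≠ v → ¬ G.Adj v w → w = μ v := by
      intro v w h1 h2
      have h3 : w ∈ Finset.univ \ insert v (G.neighborFinset v) := by
        rw [Finset.mem_sdiff, Finset.mem_insert]
        exact ⟨Finset.mem_univ _,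
          fun h => h.elim h1 (fun h => h2 ((mem_neighborFinset _ _ _).mp h))⟩
      rw [hμ v] at h3
      exact Finset.mem_singleton.mp h3
    have hμinv' : ∀ v, μ (μ v) = v := by
      intro v
      exact (hμuniq (μ v) v (Ne.symm (hμne v)) (fun h => hμnadj v h.symm)).symm
    have hadj_iff : ∀ v w, G.Adj v w ↔ (v ≠ w ∧ w ≠ μ v) := by
      intro v w
      constructor
      · intro h
        exact ⟨G.ne_of_adj h, fun he => hμnadj v (he ▸ h)⟩
      · rintro ⟨h1, h2⟩
        by_contra h
        exact h2 (hμuniq v w (Ne.symm h1) h)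
    obtain ⟨m, hm⟩ := heven
    obtain ⟨f, hb, hi, hp⟩ := pairing_lemma μ hμinv' hμne (m+1) Finset.univ
      (fun v _ => Finset.mem_univ _) (by rw [Finset.card_univ, hcard]; omega)
    have hblt : ∀ v : V, f v < n + 2 := by
      intro v
      have := hb v (Finset.mem_univ v)
      omega
    set e' : V → Fin (n+2) := fun v => ⟨f v, hblt v⟩ with he'
    have he'inj : Function.Injective e' := by
      intro a b h
      exact hi a (Finset.mem_univ a) b (Finset.mem_univ b) (congrArg Fin.val h)
    have he'bij : Function.Bijective e' :=
      (Fintype.bijective_iff_injective_and_card e').mpr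
        ⟨he'inj, by rw [hcard, Fintype.card_fin]⟩
    set e := Equiv.ofBijective e' he'bij with hedef
    have heval : ∀ z, (e z).val = f z := fun z => rfl
    refine ⟨⟨e, ?_⟩⟩
    intro a b
    rw [kPrime_adj, hadj_iff]
    constructor
    · rintro ⟨h1, h2⟩
      have hab : a ≠ b := fun h => h1 (h ▸ rfl)
      refine ⟨hab, ?_⟩
      intro hbμ
      apply h2
      rw [heval, heval, hbμ]
      exact (hp a (Finset.mem_univ a)).symm
    · rintro ⟨h1, h2⟩
      refine ⟨fun h => h1 (e.injective h), ?_⟩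
      intro hdiv
      have hdiv' : f a / 2 = f b / 2 := hdiv
      have hfa : f (μ a) / 2 = f a / 2 := hp a (Finset.mem_univ a)
      have hne1 : f a ≠ f b :=
        fun h => h1 (hi a (Finset.mem_univ a) b (Finset.mem_univ b) h)
      have hne2 : f (μ a) ≠ f a :=
        fun h => hμne a (hi (μ a) (Finset.mem_univ _) a (Finset.mem_univ a) h)
      have hne3 : f (μ a) ≠ f b :=
        fun h => h2 (hi (μ a) (Finset.mem_univ _) b (Finset.mem_univ b) h).symm
      omega
  · -- K_{n+2} case
    left
    have hdall : ∀ v, G.degree v = n+1 := fun v => by rw [degree_eq_of_vt htr v v0, hΔ]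
    have hcomp : ∀ a b : V, a ≠ b → G.Adj a b := by
      intro a b hab
      have hnbeq : G.neighborFinset a = Finset.univ.erase a := by
        apply Finset.eq_of_subset_of_card_le
        · intro w hw
          exact Finset.mem_erase.mpr
            ⟨(G.ne_of_adj ((mem_neighborFinset _ _ _).mp hw)).symm, Finset.mem_univ _⟩
        · rw [Finset.card_erase_of_mem (Finset.mem_univ _), Finset.card_univ, hcard,
            show (G.neighborFinset a).card = G.degree a from rfl, hdall]
          omega
      have hb : b ∈ G.neighborFinset a := by
        rw [hnbeq]
        exact Finset.mem_erase.mpr ⟨hab.symm, Finset.mem_univ _⟩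
      exact (mem_neighborFinset _ _ _).mp hb
    have e : V ≃ Fin (n+2) := Fintype.equivFinOfCardEq hcard
    refine ⟨⟨e, ?_⟩⟩
    intro a b
    rw [top_adj]
    constructor
    · intro h
      exact hcomp a b (fun hab => h (congrArg e hab))
    · intro h hab
      exact (G.ne_of_adj h) (e.injective hab)

lemma top_copy {n : ℕ} (hn : 4 ≤ n) :
    ∃ f : srGraph n →g (⊤ : SimpleGraph (Fin (n+2))), Function.Injective f := by
  obtain ⟨f, hf, -⟩ := srHom hn (⊤ : SimpleGraph (Fin (n+2))) (fun k => k)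
    Function.injective_id
    (fun i h1 h2 => by
      rw [top_adj]
      intro h
      have := congrArg Fin.val h
      simp at this
      omega)
    (by
      rw [top_adj]
      intro h
      have := congrArg Fin.val h
      simp at this)
  exact ⟨f, hf⟩

lemma top_vt (m : ℕ) : VertexTransitive (⊤ : SimpleGraph (Fin m)) := by
  intro u v
  refine ⟨⟨Equiv.swap u v, ?_⟩, Equiv.swap_apply_left u v⟩
  intro a b
  rw [top_adj, top_adj]
  constructor
  · intro h hab
    exact h (congrArg _ hab)
  · intro h hab
    exact h ((Equiv.swap u v).injective hab)

lemma top_conn (m : ℕ) (hm : 0 < m) : (⊤ : SimpleGraph (Fin m)).Connected := by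
  rw [connected_iff]
  refine ⟨fun u v => ?_, ⟨⟨0, hm⟩⟩⟩
  by_cases h : u = v
  · exact h ▸ Reachable.refl u
  · exact Adj.reachable (by rw [top_adj]; exact h)

lemma kPrime_copy {n : ℕ} (hn : 4 ≤ n) :
    ∃ f : srGraph n →g kPrime (n+2), Function.Injective f := by
  set e : Fin (n+2) → Fin (n+2) := fun k =>
    if h0 : k.val = 0 then ⟨0, by omega⟩ else if h1 : k.val = n+1 then ⟨1, by omega⟩
    else ⟨k.val + 1, by omega⟩ with he
  have hval : ∀ k : Fin (n+2), (k.val = 0 ∧ (e k).val = 0) ∨ (k.val = n+1 ∧ (e k).val = 1) ∨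
      (1 ≤ k.val ∧ k.val ≤ n ∧ (e k).val = k.val + 1) := by
    intro k
    by_cases h0 : k.val = 0
    · left
      refine ⟨h0, ?_⟩
      simp only [he]
      rw [dif_pos h0]
    by_cases h1 : k.val = n+1
    · right; left
      refine ⟨h1, ?_⟩
      simp only [he]
      rw [dif_neg h0, dif_pos h1]
    · right; right
      refine ⟨by omega, by omega, ?_⟩
      simp only [he]
      rw [dif_neg h0, dif_neg h1]
  have hinj : Function.Injective e := by
    intro a b hab
    have hv := congrArg Fin.val hab
    rcases hval a with ⟨h1, h2⟩ | ⟨h1, h2⟩ | ⟨h1, h1', h2⟩ <;>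
      rcases hval b with ⟨h3, h4⟩ | ⟨h3, h4⟩ | ⟨h3, h3', h4⟩ <;>
      exact Fin.ext (by omega)
  obtain ⟨f, hf, -⟩ := srHom hn (kPrime (n+2)) e hinj
    (fun i h1 h2 => by
      rw [kPrime_adj]
      have hv0 : (e ⟨0, by omega⟩).val = 0 := by
        rcases hval ⟨0, by omega⟩ with ⟨_, h⟩ | ⟨h, _⟩ | ⟨h, _, _⟩
        · exact h
        · exact absurd h (by show ¬ (0 = n+1); omega)
        · exact absurd h (by show ¬ (1 ≤ 0); omega)
      have hvi : (e i).val = i.val + 1 := by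
        rcases hval i with ⟨h, _⟩ | ⟨h, _⟩ | ⟨_, _, h⟩
        · omega
        · omega
        · exact h
      constructor
      · intro h
        have := congrArg Fin.val h
        omega
      · omega)
    (by
      rw [kPrime_adj]
      have hv1 : (e ⟨n, by omega⟩).val = n + 1 := by
        rcases hval ⟨n, by omega⟩ with ⟨h, _⟩ | ⟨h, _⟩ | ⟨_, _, h⟩
        · exact absurd h (by show ¬ (n = 0); omega)
        · exact absurd h (by show ¬ (n = n+1); omega)
        · rw [h]
      have hv2 : (e ⟨n+1, by omega⟩).val = 1 := by
        rcases hval ⟨n+1, by omega⟩ with ⟨h, _⟩ | ⟨_, h⟩ | ⟨_, h, _⟩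
        · exact absurd h (by show ¬ (n+1 = 0); omega)
        · exact h
        · exact absurd h (by show ¬ (n+1 ≤ n); omega)
      constructor
      · intro h
        have := congrArg Fin.val h
        omega
      · omega)
  exact ⟨f, hf⟩

lemma kPrime_conn (n : ℕ) (hn : 4 ≤ n) : (kPrime (n+2)).Connected := by
  rw [connected_iff]
  refine ⟨fun u v => ?_, ⟨⟨0, by omega⟩⟩⟩
  by_cases h : u = v
  · exact h ▸ Reachable.refl u
  by_cases h2 : u.val / 2 = v.val / 2
  · set z : Fin (n+2) := if u.val / 2 = 0 then ⟨2, by omega⟩ else ⟨0, by omega⟩ with hz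
    have hz2 : z.val / 2 ≠ u.val / 2 := by
      by_cases hu : u.val / 2 = 0
      · rw [hz, if_pos hu, hu]
        show 2 / 2 ≠ 0
        omega
      · rw [hz, if_neg hu]
        show 0 / 2 ≠ u.val / 2
        omega
    have ha1 : (kPrime (n+2)).Adj u z := (kPrime_adj u z).mpr
      ⟨fun hEq => hz2 (congrArg (fun w : Fin (n+2) => w.val / 2) hEq).symm, hz2.symm⟩
    have ha2 : (kPrime (n+2)).Adj z v := (kPrime_adj z v).mpr
      ⟨fun hEq => hz2 (by rw [hEq, h2]), by rw [← h2]; exact hz2⟩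
    exact (ha1.reachable).trans ha2.reachable
  · exact Adj.reachable ((kPrime_adj u v).mpr ⟨h, h2⟩)

lemma kPrime_vt (n : ℕ) (hn : 4 ≤ n) (hev : n % 2 = 0) : VertexTransitive (kPrime (n+2)) := by
  intro u v
  by_cases hp : u.val / 2 = v.val / 2
  · refine ⟨⟨Equiv.swap u v, ?_⟩, Equiv.swap_apply_left u v⟩
    intro a b
    have key : ∀ x : Fin (n+2), ((Equiv.swap u v) x).val / 2 = x.val / 2 := by
      intro x
      by_cases h1 : x = u
      · rw [h1, Equiv.swap_apply_left]
        exact hp.symm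
      by_cases h2 : x = v
      · rw [h2, Equiv.swap_apply_right]
        exact hp
      · rw [Equiv.swap_apply_of_ne_of_ne h1 h2]
    rw [kPrime_adj, kPrime_adj, key a, key b]
    constructor
    · rintro ⟨ha, hb⟩
      exact ⟨fun h => ha (congrArg _ h), hb⟩
    · rintro ⟨ha, hb⟩
      exact ⟨fun h => ha ((Equiv.swap u v).injective h), hb⟩
  · have hex : ∀ x : Fin (n+2), ∃ y : Fin (n+2),
        y.val = 2*(x.val/2) + (1 - x.val % 2) := by
      intro x
      have hx := x.isLt
      refine ⟨⟨2*(x.val/2) + (1 - x.val % 2), by omega⟩, rfl⟩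
    obtain ⟨u2, hu2⟩ := hex u
    obtain ⟨v2, hv2⟩ := hex v
    have hu2p : u2.val / 2 = u.val / 2 := by omega
    have hv2p : v2.val / 2 = v.val / 2 := by omega
    have hu2ne : u2 ≠ u := fun h => by rw [h] at hu2; omega
    have hv2ne : v2 ≠ v := fun h => by rw [h] at hv2; omega
    have hmemu : ∀ x : Fin (n+2), x.val / 2 = u.val / 2 → x = u ∨ x = u2 := by
      intro x hx
      have : x.val = u.val ∨ x.val = u2.val := by omega
      rcases this with h | h
      · exact Or.inl (Fin.ext h)
      · exact Or.inr (Fin.ext h)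
    have hmemv : ∀ x : Fin (n+2), x.val / 2 = v.val / 2 → x = v ∨ x = v2 := by
      intro x hx
      have : x.val = v.val ∨ x.val = v2.val := by omega
      rcases this with h | h
      · exact Or.inl (Fin.ext h)
      · exact Or.inr (Fin.ext h)
    have hd0 : u ≠ v := fun h => hp (by rw [h])
    have hd1 : u2 ≠ v := fun h => hp (by rw [← hu2p, h])
    have hd2 : u2 ≠ v2 := fun h => hp (by rw [← hu2p, h, hv2p])
    have hd3 : u ≠ v2 := fun h => hp (by rw [h, hv2p])
    set σ := (Equiv.swap u v).trans (Equiv.swap u2 v2) with hσ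
    have hσu : σ u = v := by
      rw [hσ, Equiv.trans_apply, Equiv.swap_apply_left,
        Equiv.swap_apply_of_ne_of_ne (fun h => hd1 h.symm) (fun h => hv2ne h.symm)]
    have key : ∀ x : Fin (n+2),
        (σ x).val / 2 = (Equiv.swap (u.val/2) (v.val/2)) (x.val / 2) := by
      intro x
      by_cases h1 : x = u
      · subst h1
        rw [hσu, Equiv.swap_apply_left]
      by_cases h2 : x = u2
      · subst h2
        have hσu2 : σ x = v2 := by
          rw [hσ, Equiv.trans_apply,
            Equiv.swap_apply_of_ne_of_ne hu2ne hd1, Equiv.swap_apply_left]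
        rw [hσu2, hv2p, hu2p, Equiv.swap_apply_left]
      by_cases h3 : x = v
      · subst h3
        have hσv : σ x = u := by
          rw [hσ, Equiv.trans_apply, Equiv.swap_apply_right,
            Equiv.swap_apply_of_ne_of_ne (fun h => hu2ne h.symm) hd3]
        rw [hσv, Equiv.swap_apply_right]
      by_cases h4 : x = v2
      · subst h4
        have hσv2 : σ x = u2 := by
          rw [hσ, Equiv.trans_apply,
            Equiv.swap_apply_of_ne_of_ne (fun h => hd3 h.symm) hv2ne,
            Equiv.swap_apply_right]
        rw [hσv2, hu2p, hv2p, Equiv.swap_apply_right]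
      · have hσx : σ x = x := by
          rw [hσ, Equiv.trans_apply, Equiv.swap_apply_of_ne_of_ne h1 h3,
            Equiv.swap_apply_of_ne_of_ne h2 h4]
        have hx1 : x.val/2 ≠ u.val/2 := fun h => by
          rcases hmemu x h with h' | h'
          exacts [h1 h', h2 h']
        have hx2 : x.val/2 ≠ v.val/2 := fun h => by
          rcases hmemv x h with h' | h'
          exacts [h3 h', h4 h']
        rw [hσx, Equiv.swap_apply_of_ne_of_ne hx1 hx2]
    refine ⟨⟨σ, ?_⟩, hσu⟩
    intro a b
    rw [kPrime_adj, kPrime_adj, key a, key b]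
    constructor
    · rintro ⟨ha, hb⟩
      exact ⟨fun h => ha (congrArg σ h), fun h => hb (congrArg _ h)⟩
    · rintro ⟨ha, hb⟩
      exact ⟨fun h => ha (σ.injective h), fun h => hb ((Equiv.swap _ _).injective h)⟩

lemma graph_props {n : ℕ} (hn : 4 ≤ n) (H : SimpleGraph (Fin (n+2)))
    (hvt : VertexTransitive H) (f0 : srGraph n →g H) (hf0 : Function.Injective f0) :
    upsilonSym (srGraph n) H = (n + 2) * upsilon (srGraph n) H ∧
      0 < upsilonSym (srGraph n) H := by
  rw [upsilonSym_eq_card H hvt f0 hf0, upsilon_eq_one H f0 hf0, Fintype.card_fin]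
  omega

/-- Part of Proposition 2.3 (even case): for even `n ≥ 4`, the only vertex-transitive
connected graphs `G` with `Υ_sym(sr_n, G) = (n+2)·Υ(sr_n, G) > 0` are `K_{n+2}` and
`K'_{n+2}`. -/
theorem stmt11 (n : ℕ) (hn : 4 ≤ n) (heven : Even n) :
    (∀ (V : Type) (_ : Fintype V) (G : SimpleGraph V),
      G.Connected → VertexTransitive G →
      upsilonSym (srGraph n) G = (n + 2) * upsilon (srGraph n) G →
      0 < upsilonSym (srGraph n) G →
      Nonempty (G ≃g (⊤ : SimpleGraph (Fin (n + 2)))) ∨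
        Nonempty (G ≃g kPrime (n + 2))) ∧
    ((⊤ : SimpleGraph (Fin (n + 2))).Connected ∧
      VertexTransitive (⊤ : SimpleGraph (Fin (n + 2))) ∧
      upsilonSym (srGraph n) (⊤ : SimpleGraph (Fin (n + 2)))
        = (n + 2) * upsilon (srGraph n) (⊤ : SimpleGraph (Fin (n + 2))) ∧
      0 < upsilonSym (srGraph n) (⊤ : SimpleGraph (Fin (n + 2)))) ∧
    ((kPrime (n + 2)).Connected ∧
      VertexTransitive (kPrime (n + 2)) ∧
      upsilonSym (srGraph n) (kPrime (n + 2))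
        = (n + 2) * upsilon (srGraph n) (kPrime (n + 2)) ∧
      0 < upsilonSym (srGraph n) (kPrime (n + 2))) := by
  obtain ⟨ft, hft⟩ := top_copy (n := n) hn
  obtain ⟨fk, hfk⟩ := kPrime_copy (n := n) hn
  have hev2 : n % 2 = 0 := Nat.even_iff.mp heven
  refine ⟨?_, ?_, ?_⟩
  · intro V iV G hconn hvt heq hpos
    exact part1 n hn heven V iV G hconn hvt heq hpos
  · obtain ⟨h1, h2⟩ := graph_props hn (⊤ : SimpleGraph (Fin (n+2))) (top_vt (n+2)) ft hft
    exact ⟨top_conn (n+2) (by omega), top_vt (n+2), h1, h2⟩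
  · obtain ⟨h1, h2⟩ := graph_props hn (kPrime (n+2)) (kPrime_vt n hn hev2) fk hfk
    exact ⟨kPrime_conn n hn, kPrime_vt n hn hev2, h1, h2⟩
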